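/- arXiv:2108.10040 — 2 statements merged into one kernel-verified Lean document; each statement's English description precedes it below -/
import Mathlib

section
/- Let Ric : Matrix (Fin 4) (Fin 4) ℝ (the generally non-symmetric Ricci tensor R_{ηα}, treated as an independent tensor argument) and let G : Matrix (Fin 4) (Fin 4) ℝ be symmetric with det G < 0. Define the Ricci-tensor-squared Lagrangian density L̃(Ric, G) = (1/2) ∑_{η,α,ξ,λ} Ric η α · Ric ξ λ · G η ξ · G α λ · (−det G)^{−1/2}. Then for all μ, ν ∈ Fin 4 the metric energy-momentum tensor density equals the canonical one: ∑_{β} (∂L̃/∂G_{(ν,β)}) · G μ β + ∑_{β} (∂L̃/∂G_{(β,ν)}) · G β μ = ∑_{β} (∂L̃/∂Ric_{(μ,β)}) · Ric ν β + ∑_{β} (∂L̃/∂Ric_{(β,μ)}) · Ric β ν − (if μ = ν then L̃(Ric,G) else 0). In particular the canonical energy-momentum tensor of the Ricci-squared Lagrangian is symmetric even when the Ricci tensor itself is non-symmetric. -/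
attribute [local instance] Matrix.normedAddCommGroup Matrix.normedSpace

open Matrix

noncomputable section
abbrev M4 := Matrix (Fin 4) (Fin 4) ℝ

def detCML : ContinuousMultilinearMap ℝ (fun _ : Fin 4 => (Fin 4 → ℝ)) ℝ :=
  { (detRowAlternating : (Fin 4 → ℝ) [⋀^Fin 4]→ₗ[ℝ] ℝ).toMultilinearMap with
    cont := by
      show Continuous ⇑((detRowAlternating : (Fin 4 → ℝ) [⋀^Fin 4]→ₗ[ℝ] ℝ).toMultilinearMap)
      have h : ⇑((detRowAlternating : (Fin 4 → ℝ) [⋀^Fin 4]→ₗ[ℝ] ℝ).toMultilinearMap)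
          = fun v : Fin 4 → Fin 4 → ℝ =>
            ∑ σ : Equiv.Perm (Fin 4), (Equiv.Perm.sign σ : ℤ) • ∏ i, v (σ i) i := by
        funext v
        exact Matrix.det_apply (Matrix.of v)
      rw [h]
      refine continuous_finset_sum _ fun σ _ => ?_
      fun_prop }

def entry1 (i j : Fin 4) : M4 × M4 →L[ℝ] ℝ :=
  LinearMap.toContinuousLinearMap
    { toFun := fun x => x.1 i j, map_add' := fun _ _ => rfl, map_smul' := fun _ _ => rfl }

def entry2 (i j : Fin 4) : M4 × M4 →L[ℝ] ℝ :=
  LinearMap.toContinuousLinearMap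
    { toFun := fun x => x.2 i j, map_add' := fun _ _ => rfl, map_smul' := fun _ _ => rfl }

def row2 (i : Fin 4) : M4 × M4 →L[ℝ] (Fin 4 → ℝ) :=
  LinearMap.toContinuousLinearMap
    { toFun := fun x => x.2 i, map_add' := fun _ _ => rfl, map_smul' := fun _ _ => rfl }

@[simp] lemma entry1_apply (i j : Fin 4) (x : M4 × M4) : entry1 i j x = x.1 i j := rfl
@[simp] lemma entry2_apply (i j : Fin 4) (x : M4 × M4) : entry2 i j x = x.2 i j := rfl
@[simp] lemma row2_apply (i : Fin 4) (x : M4 × M4) : row2 i x = x.2 i := rfl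

@[simp] lemma zero_row (x : Fin 4) : ((0 : M4) x) = (0 : Fin 4 → ℝ) := rfl

@[simp] lemma detCML_update_zero (m : Fin 4 → Fin 4 → ℝ) (x : Fin 4) :
    detCML (Function.update m x 0) = 0 :=
  detCML.map_coord_zero x (Function.update_self x 0 m)

set_option maxHeartbeats 2000000 in
lemma detCML_update (G : M4) (x : Fin 4) (r : Fin 4 → ℝ) :
    detCML (Function.update (fun k : Fin 4 => (G k : Fin 4 → ℝ)) x r)
      = (G.updateRow x r).det := rfl

set_option maxHeartbeats 2000000 in
lemma detsum (G : M4) (i j : Fin 4) :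
    ∑ x : Fin 4, detCML (Function.update (fun k : Fin 4 => (G k : Fin 4 → ℝ)) x
      (Matrix.single i j 1 x)) = adjugate G j i := by
  simp only [detCML_update]
  rw [Finset.sum_eq_single i]
  · have h1 : Matrix.single i j (1:ℝ) i = Pi.single j 1 := by
      funext y
      simp [Matrix.single, Pi.single_apply, eq_comm]
    rw [h1, Matrix.adjugate_apply]
  · intro b _ hb
    have h0 : Matrix.single i j (1:ℝ) b = 0 := by
      funext y
      simp [Matrix.single, hb.symm]
    rw [h0]
    exact Matrix.det_eq_zero_of_row_eq_zero b (fun y => by rw [Matrix.updateRow_self]; rfl)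
  · simp

/-- for quadratic gravity with the Ricci tensor squared, the metric
energy-momentum tensor density equals the canonical one (Eqs. (26a)–(26c)). -/
theorem ricci_squared_emt_identity
    (Ric G : Matrix (Fin 4) (Fin 4) ℝ) (hG : G.IsSymm) (hdet : G.det < 0)
    (L : Matrix (Fin 4) (Fin 4) ℝ × Matrix (Fin 4) (Fin 4) ℝ → ℝ)
    (hL : L = fun x =>
      (1 / 2) * (∑ η, ∑ α, ∑ ξ, ∑ l, x.1 η α * x.1 ξ l * x.2 η ξ * x.2 α l)
        * (-x.2.det) ^ (-(1 / 2) : ℝ)) :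
    ∀ μ ν : Fin 4,
      (∑ β, fderiv ℝ L (Ric, G) (0, Matrix.single ν β 1) * G μ β)
      + (∑ β, fderiv ℝ L (Ric, G) (0, Matrix.single β ν 1) * G β μ)
      = (∑ β, fderiv ℝ L (Ric, G) (Matrix.single μ β 1, 0) * Ric ν β)
        + (∑ β, fderiv ℝ L (Ric, G) (Matrix.single β μ 1, 0) * Ric β ν)
        - (if μ = ν then L (Ric, G) else 0) := by
  subst hL
  set p : M4 × M4 := (Ric, G) with hp
  have h0 : (0:ℝ) < -G.det := by linarith
  have hr : HasDerivAt (fun y : ℝ => (-y) ^ (-(1/2):ℝ))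
      ((1/2) * (-G.det) ^ (-(3/2):ℝ)) G.det := by
    have h1 : HasDerivAt (fun y : ℝ => y ^ (-(1/2):ℝ))
        ((-(1/2)) * (-G.det) ^ ((-(1/2):ℝ) - 1)) (-G.det) :=
      Real.hasDerivAt_rpow_const (Or.inl (ne_of_gt h0))
    have h2 : HasDerivAt (fun y : ℝ => -y) (-1) G.det := hasDerivAt_neg _
    have h3 := h1.comp G.det h2
    have h4 : ((1/2) * (-G.det) ^ (-(3/2):ℝ))
        = (-(1/2)) * (-G.det) ^ ((-(1/2):ℝ) - 1) * -1 := by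
      rw [show ((-(1/2):ℝ) - 1) = -(3/2) by norm_num]
      ring
    rw [h4]
    exact h3
  have hdet2 : HasFDerivAt (fun x : M4 × M4 => x.2.det)
      (∑ i, (detCML.toContinuousLinearMap (fun j => p.2 j) i) ∘L row2 i) p :=
    HasFDerivAt.multilinear_comp detCML (fun i => (row2 i).hasFDerivAt)
  have hd : HasFDerivAt (fun x : M4 × M4 => (-x.2.det) ^ (-(1/2):ℝ))
      (((1/2) * (-G.det) ^ (-(3/2):ℝ)) •
        (∑ i, (detCML.toContinuousLinearMap (fun j => p.2 j) i) ∘L row2 i)) p :=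
    by have := hr.comp_hasFDerivAt p hdet2; exact this
  have hS : HasFDerivAt
      (fun x : M4 × M4 => ∑ η, ∑ α, ∑ ξ, ∑ l, x.1 η α * x.1 ξ l * x.2 η ξ * x.2 α l)
      (∑ η : Fin 4, ∑ α : Fin 4, ∑ ξ : Fin 4, ∑ l : Fin 4,
        ((Ric η α * Ric ξ l * G η ξ) • entry2 α l
          + G α l • ((Ric η α * Ric ξ l) • entry2 η ξ
            + G η ξ • (Ric η α • entry1 ξ l + Ric ξ l • entry1 η α)))) p := by
    refine HasFDerivAt.fun_sum fun η _ => ?_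
    refine HasFDerivAt.fun_sum fun α _ => ?_
    refine HasFDerivAt.fun_sum fun ξ _ => ?_
    refine HasFDerivAt.fun_sum fun l _ => ?_
    have e1h : ∀ i j : Fin 4, HasFDerivAt (fun x : M4 × M4 => x.1 i j) (entry1 i j) p :=
      fun i j => (entry1 i j).hasFDerivAt
    have e2h : ∀ i j : Fin 4, HasFDerivAt (fun x : M4 × M4 => x.2 i j) (entry2 i j) p :=
      fun i j => (entry2 i j).hasFDerivAt
    exact (((e1h η α).mul (e1h ξ l)).mul (e2h η ξ)).mul (e2h α l)
  have hLd : fderiv ℝ (fun x : M4 × M4 =>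
      (1 / 2) * (∑ η, ∑ α, ∑ ξ, ∑ l, x.1 η α * x.1 ξ l * x.2 η ξ * x.2 α l)
        * (-x.2.det) ^ (-(1 / 2) : ℝ)) p
      = ((1 / 2) * (∑ η : Fin 4, ∑ α : Fin 4, ∑ ξ : Fin 4, ∑ l : Fin 4,
          Ric η α * Ric ξ l * G η ξ * G α l)) • (((1/2) * (-G.det) ^ (-(3/2):ℝ)) •
          (∑ i, (detCML.toContinuousLinearMap (fun j => p.2 j) i) ∘L row2 i))
        + ((-G.det) ^ (-(1/2):ℝ)) • ((1/2 : ℝ) • (∑ η : Fin 4, ∑ α : Fin 4, ∑ ξ : Fin 4, ∑ l : Fin 4,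
          ((Ric η α * Ric ξ l * G η ξ) • entry2 α l
            + G α l • ((Ric η α * Ric ξ l) • entry2 η ξ
              + G η ξ • (Ric η α • entry1 ξ l + Ric ξ l • entry1 η α))))) :=
    ((hS.const_mul (1/2)).fun_mul hd).fderiv
  set Sval : ℝ := ∑ η : Fin 4, ∑ α : Fin 4, ∑ ξ : Fin 4, ∑ l : Fin 4,
      Ric η α * Ric ξ l * G η ξ * G α l with hSval
  set dG : ℝ := (-G.det) ^ (-(1/2):ℝ) with hdG
  set C2 : ℝ := (1/2) * (-G.det) ^ (-(3/2):ℝ) with hC2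
  have keyG : ∀ i j : Fin 4, fderiv ℝ (fun x : M4 × M4 =>
      (1 / 2) * (∑ η, ∑ α, ∑ ξ, ∑ l, x.1 η α * x.1 ξ l * x.2 η ξ * x.2 α l)
        * (-x.2.det) ^ (-(1 / 2) : ℝ)) p (0, Matrix.single i j 1)
      = (1/2 * Sval) * (C2 * adjugate G j i)
        + dG * ((1/2) * ((∑ η, ∑ ξ, Ric η i * Ric ξ j * G η ξ)
            + (∑ α, ∑ l, Ric i α * Ric j l * G α l))) := by
    intro i j
    rw [hLd]
    rw [show ((0 : M4), Matrix.single i j (1:ℝ)) = ((0 : M4), Matrix.single i j (1:ℝ)) from rfl]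
    simp only [ContinuousLinearMap.add_apply, ContinuousLinearMap.smul_apply,
      ContinuousLinearMap.coe_sum', Finset.sum_apply, ContinuousLinearMap.comp_apply,
      smul_eq_mul, entry1_apply, entry2_apply, row2_apply,
      ContinuousMultilinearMap.toContinuousLinearMap_apply]
    rw [detsum G i j]
    simp only [Matrix.single, Matrix.of_apply, Matrix.zero_apply, ite_and, mul_ite,
      mul_one, mul_zero, ite_mul, zero_mul, mul_comm, Finset.sum_add_distrib,
      Finset.sum_ite_irrel, Finset.sum_ite_eq, Finset.sum_ite_eq',
      Finset.mem_univ, if_true, add_zero, zero_add, Finset.sum_const_zero]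
  have keyR : ∀ i j : Fin 4, fderiv ℝ (fun x : M4 × M4 =>
      (1 / 2) * (∑ η, ∑ α, ∑ ξ, ∑ l, x.1 η α * x.1 ξ l * x.2 η ξ * x.2 α l)
        * (-x.2.det) ^ (-(1 / 2) : ℝ)) p (Matrix.single i j 1, 0)
      = dG * ((1/2) * ((∑ ξ, ∑ l, Ric ξ l * G i ξ * G j l)
            + (∑ η, ∑ α, Ric η α * G η i * G α j))) := by
    intro i j
    rw [hLd]
    simp only [ContinuousLinearMap.add_apply, ContinuousLinearMap.smul_apply,
      ContinuousLinearMap.coe_sum', Finset.sum_apply, ContinuousLinearMap.comp_apply,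
      smul_eq_mul, entry1_apply, entry2_apply, row2_apply,
      ContinuousMultilinearMap.toContinuousLinearMap_apply]
    simp only [zero_row, detCML_update_zero, Matrix.zero_apply,
      Matrix.single, Matrix.of_apply, ite_and, mul_add, add_mul, mul_ite,
      mul_one, mul_zero, ite_mul, zero_mul, mul_comm, Finset.sum_add_distrib,
      Finset.sum_ite_irrel, Finset.sum_ite_eq, Finset.sum_ite_eq',
      Finset.mem_univ, if_true, add_zero, zero_add, Finset.sum_const_zero]
    ring
  have hxx : dG = (-G.det) ^ (-(3/2):ℝ) * (-G.det) := by
    rw [hdG, show (-(1/2):ℝ) = (-(3/2)) + 1 by norm_num, Real.rpow_add h0, Real.rpow_one]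
  intro μ ν
  simp only [keyG, keyR]
  rw [← hSval, ← hdG]
  simp only [add_mul, Finset.sum_add_distrib]
  have hadj1 : ∑ x : Fin 4, 1 / 2 * Sval * (C2 * G.adjugate x ν) * G μ x
      = 1/2 * Sval * C2 * G.det * (if μ = ν then 1 else 0) := by
    have h := congrArg (fun M : M4 => M μ ν) (Matrix.mul_adjugate G)
    simp only [Matrix.mul_apply, Matrix.smul_apply, Matrix.one_apply, smul_eq_mul] at h
    calc ∑ x : Fin 4, 1/2 * Sval * (C2 * G.adjugate x ν) * G μ x
        = ∑ x : Fin 4, (1/2*Sval*C2) * (G μ x * G.adjugate x ν) :=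
          Finset.sum_congr rfl fun x _ => by ring
      _ = 1/2*Sval*C2 * ∑ x : Fin 4, G μ x * G.adjugate x ν := (Finset.mul_sum _ _ _).symm
      _ = _ := by rw [h]; ring
  have hadj2 : ∑ x : Fin 4, 1 / 2 * Sval * (C2 * G.adjugate ν x) * G x μ
      = 1/2 * Sval * C2 * G.det * (if μ = ν then 1 else 0) := by
    have h := congrArg (fun M : M4 => M ν μ) (Matrix.adjugate_mul G)
    simp only [Matrix.mul_apply, Matrix.smul_apply, Matrix.one_apply, smul_eq_mul] at h
    have hite : (if ν = μ then (1:ℝ) else 0) = (if μ = ν then 1 else 0) := by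
      by_cases hh : μ = ν <;> simp [hh, eq_comm]
    calc ∑ x : Fin 4, 1/2 * Sval * (C2 * G.adjugate ν x) * G x μ
        = ∑ x : Fin 4, (1/2*Sval*C2) * (G.adjugate ν x * G x μ) :=
          Finset.sum_congr rfl fun x _ => by ring
      _ = 1/2*Sval*C2 * ∑ x : Fin 4, G.adjugate ν x * G x μ := (Finset.mul_sum _ _ _).symm
      _ = _ := by rw [h, hite]; ring
  rw [hadj1, hadj2]
  have hpoly : ∑ x : Fin 4, dG * (1 / 2 *
        (∑ η : Fin 4, ∑ ξ : Fin 4, Ric η ν * Ric ξ x * G η ξ +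
          ∑ α : Fin 4, ∑ l : Fin 4, Ric ν α * Ric x l * G α l)) * G μ x
      + ∑ x : Fin 4, dG * (1 / 2 *
        (∑ η : Fin 4, ∑ ξ : Fin 4, Ric η x * Ric ξ ν * G η ξ +
          ∑ α : Fin 4, ∑ l : Fin 4, Ric x α * Ric ν l * G α l)) * G x μ
      = ∑ x : Fin 4, dG * (1 / 2 *
        (∑ ξ : Fin 4, ∑ l : Fin 4, Ric ξ l * G μ ξ * G x l +
          ∑ η : Fin 4, ∑ α : Fin 4, Ric η α * G η μ * G α x)) * Ric ν x
      + ∑ x : Fin 4, dG * (1 / 2 *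
        (∑ ξ : Fin 4, ∑ l : Fin 4, Ric ξ l * G x ξ * G μ l +
          ∑ η : Fin 4, ∑ α : Fin 4, Ric η α * G η x * G α μ)) * Ric x ν := by
    simp only [Fin.sum_univ_four]
    ring
  by_cases hμν : μ = ν
  · simp only [hμν, if_true, mul_one]
    subst hμν
    linear_combination hpoly + (Sval * G.det) * hC2 + (1/2 * Sval) * hxx
  · simp only [hμν, if_false, mul_zero, sub_zero]
    linear_combination hpoly
end
end

section
/- Let Riem : Fin 4 → Fin 4 → Fin 4 → Fin 4 → ℝ (components R^k_{iξλ}, first two arguments Lorentz indices, last two space-time indices), let e : Matrix (Fin 4) (Fin 4) ℝ be invertible (the vierbein e_i^μ), and let H : Matrix (Fin 4) (Fin 4) ℝ (the frame metric η^{ij}, treated as an independent argument). With ε = (det e)⁻¹, define R̃(Riem, e, H) = ∑_{k,i,j,ξ,λ} Riem k i ξ λ · e k ξ · e j λ · H i j · ε. Then for all m, n ∈ Fin 4: −∑_{β} (∂R̃/∂e_{(n,β)}) · e m β + ∑_{k} (∂R̃/∂H_{(m,k)}) · H n k + ∑_{k} (∂R̃/∂H_{(k,m)}) · H k n + ∑_{k,β,λ}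 (∂R̃/∂Riem_{(m,k,β,λ)}) · Riem n k β λ − ∑_{k,β,λ} (∂R̃/∂Riem_{(k,n,β,λ)}) · Riem k m β λ = (if m = n then R̃(Riem, e, H) else 0), where the partial derivatives are Fréchet partial derivatives at (Riem, e, H). -/
attribute [local instance] Matrix.normedAddCommGroup Matrix.normedSpace

set_option maxHeartbeats 2000000 in
/-- Eq. (23), the tensor identity for the Lorentz (nonholonomic) index
class of the vierbein Einstein-Hilbert-Cartan density, with the space-time
(holonomic) indices fully contracted. -/
theorem vierbein_ehc_nonholonomic_identity
    (Riem : Fin 4 → Fin 4 → Fin 4 → Fin 4 → ℝ)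
    (e : Matrix (Fin 4) (Fin 4) ℝ) (he : IsUnit e.det)
    (H : Matrix (Fin 4) (Fin 4) ℝ)
    (Rt : (Fin 4 → Fin 4 → Fin 4 → Fin 4 → ℝ) × Matrix (Fin 4) (Fin 4) ℝ
            × Matrix (Fin 4) (Fin 4) ℝ → ℝ)
    (hRt : Rt = fun x =>
      ∑ k, ∑ i, ∑ j, ∑ ξ, ∑ l,
        x.1 k i ξ l * x.2.1 k ξ * x.2.1 j l * x.2.2 i j * (x.2.1.det)⁻¹) :
    ∀ m n : Fin 4,
      -(∑ β, fderiv ℝ Rt (Riem, e, H) (0, Matrix.single n β 1, 0) * e m β)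
      + (∑ k, fderiv ℝ Rt (Riem, e, H) (0, 0, Matrix.single m k 1) * H n k)
      + (∑ k, fderiv ℝ Rt (Riem, e, H) (0, 0, Matrix.single k m 1) * H k n)
      + (∑ k, ∑ β, ∑ l, fderiv ℝ Rt (Riem, e, H)
          ((fun a b c d => if a = m ∧ b = k ∧ c = β ∧ d = l then 1 else 0), 0, 0)
          * Riem n k β l)
      - (∑ k, ∑ β, ∑ l, fderiv ℝ Rt (Riem, e, H)
          ((fun a b c d => if a = k ∧ b = n ∧ c = β ∧ d = l then 1 else 0), 0, 0)
          * Riem k m β l)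
      = if m = n then Rt (Riem, e, H) else 0 := by
  have hd : e.det ≠ 0 := by rcases he with ⟨u, hu⟩; simp [← hu]
  -- differentiability
  have hdet : Differentiable ℝ (fun x : (Fin 4 → Fin 4 → Fin 4 → Fin 4 → ℝ) ×
      Matrix (Fin 4) (Fin 4) ℝ × Matrix (Fin 4) (Fin 4) ℝ => (x.2.1).det) := by
    have : (fun x : (Fin 4 → Fin 4 → Fin 4 → Fin 4 → ℝ) ×
        Matrix (Fin 4) (Fin 4) ℝ × Matrix (Fin 4) (Fin 4) ℝ => (x.2.1).det)
        = fun x => ∑ σ : Equiv.Perm (Fin 4),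
        ((Equiv.Perm.sign σ : ℤ) : ℝ) * (x.2.1 (σ 0) 0 * (x.2.1 (σ 1) 1
          * (x.2.1 (σ 2) 2 * x.2.1 (σ 3) 3))) := by
      funext x; rw [Matrix.det_apply']; congr 1; funext σ; rw [Fin.prod_univ_four]; ring
    rw [this]
    apply Differentiable.fun_sum
    intro σ _
    fun_prop
  have hdiff : DifferentiableAt ℝ Rt (Riem, e, H) := by
    rw [hRt]
    apply DifferentiableAt.fun_sum; intro k _
    apply DifferentiableAt.fun_sum; intro i _
    apply DifferentiableAt.fun_sum; intro j _
    apply DifferentiableAt.fun_sum; intro ξ _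
    apply DifferentiableAt.fun_sum; intro l _
    have h5 : DifferentiableAt ℝ (fun x : (Fin 4 → Fin 4 → Fin 4 → Fin 4 → ℝ) ×
        Matrix (Fin 4) (Fin 4) ℝ × Matrix (Fin 4) (Fin 4) ℝ => (x.2.1.det)⁻¹) (Riem, e, H) :=
      (hdet _).inv (by simpa using hd)
    have h1 : DifferentiableAt ℝ (fun x : (Fin 4 → Fin 4 → Fin 4 → Fin 4 → ℝ) ×
        Matrix (Fin 4) (Fin 4) ℝ × Matrix (Fin 4) (Fin 4) ℝ => x.1 k i ξ l) (Riem, e, H) := by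
      fun_prop
    have h2 : DifferentiableAt ℝ (fun x : (Fin 4 → Fin 4 → Fin 4 → Fin 4 → ℝ) ×
        Matrix (Fin 4) (Fin 4) ℝ × Matrix (Fin 4) (Fin 4) ℝ => x.2.1 k ξ) (Riem, e, H) := by
      fun_prop
    have h3 : DifferentiableAt ℝ (fun x : (Fin 4 → Fin 4 → Fin 4 → Fin 4 → ℝ) ×
        Matrix (Fin 4) (Fin 4) ℝ × Matrix (Fin 4) (Fin 4) ℝ => x.2.1 j l) (Riem, e, H) := by
      fun_prop
    have h4 : DifferentiableAt ℝ (fun x : (Fin 4 → Fin 4 → Fin 4 → Fin 4 → ℝ) ×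
        Matrix (Fin 4) (Fin 4) ℝ × Matrix (Fin 4) (Fin 4) ℝ => x.2.2 i j) (Riem, e, H) := by
      fun_prop
    exact (((h1.mul h2).mul h3).mul h4).mul h5
  -- Riem-direction derivative
  have hfR : ∀ ΔR, fderiv ℝ Rt (Riem, e, H) (ΔR, 0, 0)
      = ∑ k, ∑ i, ∑ j, ∑ ξ, ∑ l, ΔR k i ξ l * e k ξ * e j l * H i j * (e.det)⁻¹ := by
    intro ΔR
    have hfun : (fun t : ℝ => Rt ((Riem, e, H) + t • (ΔR, 0, 0))) = fun t =>
        ∑ k, ∑ i, ∑ j, ∑ ξ, ∑ l,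
          (Riem k i ξ l + t * ΔR k i ξ l) * e k ξ * e j l * H i j * (e.det)⁻¹ := by
      funext t
      rw [hRt]
      simp [Prod.smul_mk, Prod.mk_add_mk, smul_zero, Pi.add_apply, Pi.smul_apply, smul_eq_mul]
    have hder : HasDerivAt (fun t : ℝ => Rt ((Riem, e, H) + t • (ΔR, 0, 0)))
        (∑ k, ∑ i, ∑ j, ∑ ξ, ∑ l, ΔR k i ξ l * e k ξ * e j l * H i j * (e.det)⁻¹) 0 := by
      rw [hfun]
      apply HasDerivAt.fun_sum; intro k _
      apply HasDerivAt.fun_sum; intro i _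
      apply HasDerivAt.fun_sum; intro j _
      apply HasDerivAt.fun_sum; intro ξ _
      apply HasDerivAt.fun_sum; intro l _
      have h0 : HasDerivAt (fun t : ℝ => Riem k i ξ l + t * ΔR k i ξ l) (ΔR k i ξ l) 0 := by
        simpa using ((hasDerivAt_id (0:ℝ)).mul_const (ΔR k i ξ l)).const_add (Riem k i ξ l)
      simpa using (((h0.mul_const (e k ξ)).mul_const (e j l)).mul_const (H i j)).mul_const (e.det)⁻¹
    have hlin : HasDerivAt (fun t : ℝ => Rt ((Riem, e, H) + t • (ΔR, 0, 0)))
        (fderiv ℝ Rt (Riem, e, H) (ΔR, 0, 0)) 0 :=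
      hdiff.hasFDerivAt.hasLineDerivAt _
    exact hlin.unique hder
  -- H-direction derivative
  have hfH : ∀ ΔH : Matrix (Fin 4) (Fin 4) ℝ, fderiv ℝ Rt (Riem, e, H) (0, 0, ΔH)
      = ∑ k, ∑ i, ∑ j, ∑ ξ, ∑ l, Riem k i ξ l * e k ξ * e j l * ΔH i j * (e.det)⁻¹ := by
    intro ΔH
    have hfun : (fun t : ℝ => Rt ((Riem, e, H) + t • ((0 : Fin 4 → Fin 4 → Fin 4 → Fin 4 → ℝ),
        (0 : Matrix (Fin 4) (Fin 4) ℝ), ΔH))) = fun t =>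
        ∑ k, ∑ i, ∑ j, ∑ ξ, ∑ l,
          Riem k i ξ l * e k ξ * e j l * (H i j + t * ΔH i j) * (e.det)⁻¹ := by
      funext t
      rw [hRt]
      simp [Prod.smul_mk, Prod.mk_add_mk, smul_zero, Matrix.add_apply, Matrix.smul_apply,
        smul_eq_mul]
    have hder : HasDerivAt (fun t : ℝ => Rt ((Riem, e, H) +
        t • ((0 : Fin 4 → Fin 4 → Fin 4 → Fin 4 → ℝ), (0 : Matrix (Fin 4) (Fin 4) ℝ), ΔH)))
        (∑ k, ∑ i, ∑ j, ∑ ξ, ∑ l, Riem k i ξ l * e k ξ * e j l * ΔH i j * (e.det)⁻¹) 0 := by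
      rw [hfun]
      apply HasDerivAt.fun_sum; intro k _
      apply HasDerivAt.fun_sum; intro i _
      apply HasDerivAt.fun_sum; intro j _
      apply HasDerivAt.fun_sum; intro ξ _
      apply HasDerivAt.fun_sum; intro l _
      have h0 : HasDerivAt (fun t : ℝ => H i j + t * ΔH i j) (ΔH i j) 0 := by
        simpa using ((hasDerivAt_id (0:ℝ)).mul_const (ΔH i j)).const_add (H i j)
      simpa using ((h0.const_mul (Riem k i ξ l * e k ξ * e j l)).mul_const
        (e.det)⁻¹).congr_deriv (by ring)
    have hlin : HasDerivAt (fun t : ℝ => Rt ((Riem, e, H) +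
        t • ((0 : Fin 4 → Fin 4 → Fin 4 → Fin 4 → ℝ), (0 : Matrix (Fin 4) (Fin 4) ℝ), ΔH)))
        (fderiv ℝ Rt (Riem, e, H) (0, 0, ΔH)) 0 :=
      hdiff.hasFDerivAt.hasLineDerivAt _
    exact hlin.unique hder
  -- e-direction derivative
  have hfe : ∀ a b, fderiv ℝ Rt (Riem, e, H) (0, Matrix.single a b 1, 0)
      = (∑ i, ∑ j, ∑ l, Riem a i b l * e j l * H i j) * (e.det)⁻¹
      + (∑ k, ∑ i, ∑ ξ, Riem k i ξ b * e k ξ * H i a) * (e.det)⁻¹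
      - (∑ k, ∑ i, ∑ j, ∑ ξ, ∑ l, Riem k i ξ l * e k ξ * e j l * H i j)
          * (e.adjugate b a * ((e.det)⁻¹)^2) := by
    intro a b
    set E : Matrix (Fin 4) (Fin 4) ℝ := Matrix.single a b 1 with hE
    set c := e.adjugate b a with hc
    have hdetline : ∀ t : ℝ, (e + t • E).det = e.det + t * c := by
      intro t
      have h : e + t • E = e.updateRow a (e a + t • (Pi.single b 1 : Fin 4 → ℝ)) := by
        ext k ξ
        rcases eq_or_ne k a with rfl | hk
        · simp [hE, Matrix.updateRow_apply, Matrix.single, Pi.single_apply, eq_comm]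
        · simp [hE, Matrix.updateRow_apply, hk, Matrix.single, Ne.symm hk]
      rw [h, Matrix.det_updateRow_add, Matrix.det_updateRow_smul, Matrix.updateRow_eq_self, hc,
        Matrix.adjugate_apply]
    have hfun : (fun t : ℝ => Rt ((Riem, e, H) +
        t • ((0 : Fin 4 → Fin 4 → Fin 4 → Fin 4 → ℝ), E, (0 : Matrix (Fin 4) (Fin 4) ℝ))))
        = fun t => ∑ k, ∑ i, ∑ j, ∑ ξ, ∑ l,
          Riem k i ξ l * (e k ξ + t * E k ξ) * (e j l + t * E j l) * H i j
            * (e.det + t * c)⁻¹ := by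
      funext t
      rw [hRt]
      simp only [Prod.smul_mk, Prod.mk_add_mk, smul_zero, add_zero, Matrix.add_apply,
        Matrix.smul_apply, smul_eq_mul, hdetline t]
    have hder : HasDerivAt (fun t : ℝ => Rt ((Riem, e, H) +
        t • ((0 : Fin 4 → Fin 4 → Fin 4 → Fin 4 → ℝ), E, (0 : Matrix (Fin 4) (Fin 4) ℝ))))
        (∑ k, ∑ i, ∑ j, ∑ ξ, ∑ l,
          (Riem k i ξ l * (E k ξ * e j l + e k ξ * E j l) * H i j * (e.det)⁻¹
            - Riem k i ξ l * e k ξ * e j l * H i j * (c * ((e.det)⁻¹)^2))) 0 := by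
      rw [hfun]
      apply HasDerivAt.fun_sum; intro k _
      apply HasDerivAt.fun_sum; intro i _
      apply HasDerivAt.fun_sum; intro j _
      apply HasDerivAt.fun_sum; intro ξ _
      apply HasDerivAt.fun_sum; intro l _
      have h1 : HasDerivAt (fun t : ℝ => e k ξ + t * E k ξ) (E k ξ) 0 := by
        simpa using ((hasDerivAt_id (0:ℝ)).mul_const (E k ξ)).const_add (e k ξ)
      have h2 : HasDerivAt (fun t : ℝ => e j l + t * E j l) (E j l) 0 := by
        simpa using ((hasDerivAt_id (0:ℝ)).mul_const (E j l)).const_add (e j l)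
      have h3 : HasDerivAt (fun t : ℝ => e.det + t * c) c 0 := by
        simpa using ((hasDerivAt_id (0:ℝ)).mul_const c).const_add e.det
      have hinv : HasDerivAt (fun t : ℝ => (e.det + t * c)⁻¹) (-c / e.det ^ 2) 0 := by
        have h := h3.inv (x := 0) (by simpa using hd)
        simp only [zero_mul, add_zero] at h
        exact h
      have := (((h1.const_mul (Riem k i ξ l)).fun_mul h2).mul_const (H i j)).fun_mul hinv
      convert this using 1
      · rfl
      simp only [mul_zero, zero_mul, add_zero, zero_add, mul_one]
      field_simp
      ring
    have hlin : HasDerivAt (fun t : ℝ => Rt ((Riem, e, H) +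
        t • ((0 : Fin 4 → Fin 4 → Fin 4 → Fin 4 → ℝ), E, (0 : Matrix (Fin 4) (Fin 4) ℝ))))
        (fderiv ℝ Rt (Riem, e, H) (0, E, 0)) 0 :=
      hdiff.hasFDerivAt.hasLineDerivAt _
    rw [hlin.unique hder]
    simp only [Finset.sum_sub_distrib, mul_add, add_mul, Finset.sum_add_distrib,
      ← Finset.sum_mul]
    congr 2
    · congr 1
      simp [hE, Matrix.single, ite_and, mul_ite, ite_mul, mul_zero, zero_mul, mul_one]
    · congr 1
      simp [hE, Matrix.single, ite_and, mul_ite, ite_mul, mul_zero, zero_mul, mul_one]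
  -- main computation
  intro m n
  have hadj : ∑ β, e m β * e.adjugate β n = e.det * (if m = n then 1 else 0) := by
    have h2 : (e * e.adjugate) m n = e.det * (if m = n then 1 else 0) := by
      rw [Matrix.mul_adjugate]; simp [Matrix.one_apply]
    rw [← h2, Matrix.mul_apply]
  have hRtp : Rt (Riem, e, H) = (∑ k, ∑ i, ∑ j, ∑ ξ, ∑ l,
      Riem k i ξ l * e k ξ * e j l * H i j) * (e.det)⁻¹ := by
    rw [hRt]; simp only [← Finset.sum_mul]
  have hG1 : (∑ β, fderiv ℝ Rt (Riem, e, H) (0, Matrix.single n β 1, 0) * e m β)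
      = (∑ β, (∑ i, ∑ j, ∑ l, Riem n i β l * e j l * H i j) * (e.det)⁻¹ * e m β)
      + (∑ β, (∑ k, ∑ i, ∑ ξ, Riem k i ξ β * e k ξ * H i n) * (e.det)⁻¹ * e m β)
      - (if m = n then (∑ k, ∑ i, ∑ j, ∑ ξ, ∑ l,
          Riem k i ξ l * e k ξ * e j l * H i j) * (e.det)⁻¹ else 0) := by
    simp only [hfe, sub_mul, add_mul, Finset.sum_sub_distrib, Finset.sum_add_distrib]
    congr 1
    have h3 : ∀ β, (∑ k, ∑ i, ∑ j, ∑ ξ, ∑ l, Riem k i ξ l * e k ξ * e j l * H i j)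
        * (e.adjugate β n * ((e.det)⁻¹)^2) * e m β
        = ((∑ k, ∑ i, ∑ j, ∑ ξ, ∑ l, Riem k i ξ l * e k ξ * e j l * H i j) * ((e.det)⁻¹)^2)
          * (e m β * e.adjugate β n) := fun β => by ring
    rw [Finset.sum_congr rfl (fun β _ => h3 β), ← Finset.mul_sum, hadj]
    rcases eq_or_ne m n with rfl | hmn
    · simp only [if_pos rfl, if_true, mul_one]
      field_simp
    · simp [hmn]
  have hG2 : (∑ k, fderiv ℝ Rt (Riem, e, H) (0, 0, Matrix.single m k 1) * H n k)
      = ∑ k, (∑ k', ∑ ξ, ∑ l, Riem k' m ξ l * e k' ξ * e k l * (e.det)⁻¹) * H n k := by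
    simp only [hfH]
    simp [Matrix.single, ite_and, mul_ite, ite_mul, mul_zero, zero_mul, mul_one]
  have hG3 : (∑ k, fderiv ℝ Rt (Riem, e, H) (0, 0, Matrix.single k m 1) * H k n)
      = ∑ β, (∑ k, ∑ i, ∑ ξ, Riem k i ξ β * e k ξ * H i n) * (e.det)⁻¹ * e m β := by
    simp only [hfH]
    have hL : ∀ k : Fin 4, (∑ k', ∑ i, ∑ j, ∑ ξ, ∑ l, Riem k' i ξ l * e k' ξ * e j l
        * (Matrix.single k m 1) i j * (e.det)⁻¹)
        = ∑ k', ∑ ξ, ∑ l, Riem k' k ξ l * e k' ξ * e m l * (e.det)⁻¹ := by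
      intro k
      simp [Matrix.single, ite_and, mul_ite, ite_mul, mul_zero, zero_mul, mul_one]
    rw [Finset.sum_congr rfl (fun k _ => by rw [hL k])]
    simp only [Fin.sum_univ_four, Finset.sum_mul, Finset.mul_sum]
    ring
  have hG4 : (∑ k, ∑ β, ∑ l, fderiv ℝ Rt (Riem, e, H)
          ((fun a b c d => if a = m ∧ b = k ∧ c = β ∧ d = l then 1 else 0), 0, 0)
          * Riem n k β l)
      = ∑ β, (∑ i, ∑ j, ∑ l, Riem n i β l * e j l * H i j) * (e.det)⁻¹ * e m β := by
    simp only [hfR]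
    have hL4 : ∀ k β l : Fin 4, (∑ k', ∑ i, ∑ j, ∑ ξ, ∑ l',
        (if k' = m ∧ i = k ∧ ξ = β ∧ l' = l then (1:ℝ) else 0) * e k' ξ * e j l' * H i j
          * (e.det)⁻¹)
        = ∑ j, e m β * e j l * H k j * (e.det)⁻¹ := by
      intro k β l
      simp [ite_and, mul_ite, ite_mul, mul_zero, zero_mul, mul_one, one_mul]
    simp only [hL4]
    simp only [Fin.sum_univ_four, Finset.sum_mul, Finset.mul_sum]
    ring
  have hG5 : (∑ k, ∑ β, ∑ l, fderiv ℝ Rt (Riem, e, H)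
          ((fun a b c d => if a = k ∧ b = n ∧ c = β ∧ d = l then 1 else 0), 0, 0)
          * Riem k m β l)
      = ∑ k, (∑ k', ∑ ξ, ∑ l, Riem k' m ξ l * e k' ξ * e k l * (e.det)⁻¹) * H n k := by
    simp only [hfR]
    have hL5 : ∀ k β l : Fin 4, (∑ k', ∑ i, ∑ j, ∑ ξ, ∑ l',
        (if k' = k ∧ i = n ∧ ξ = β ∧ l' = l then (1:ℝ) else 0) * e k' ξ * e j l' * H i j
          * (e.det)⁻¹)
        = ∑ j, e k β * e j l * H n j * (e.det)⁻¹ := by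
      intro k β l
      simp [ite_and, mul_ite, ite_mul, mul_zero, zero_mul, mul_one, one_mul]
    simp only [hL5]
    simp only [Fin.sum_univ_four, Finset.sum_mul, Finset.mul_sum]
    ring
  rw [hG1, hG2, hG3, hG4, hG5, hRtp]
  ring
end
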